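/- Let α₁, α₂, g > 0 and T > 0. Let u, ρ̄ : ℝ × [0,T) → ℝ be functions such that u is twice continuously differentiable, ρ̄ is continuously differentiable in x, and for each t the function p(·,t) defined by p(x,t) = u(x,t)² + (α₁²/2) (∂_x u(x,t))² + (g/2) ρ̄(x,t)² - (g α₂²/2) (∂_x ρ̄(x,t))² is continuous, bounded, and integrable on ℝ. Suppose the nonlocal MCH2 velocity equation ∂_t u(x,t) + u(x,t) ∂_x u(x,t) = - ∂_x [ (1/(2α₁)) ∫_ℝ e^{-|x-y|/α₁} p(y,t) dy ] holds for all (x,t), and that the mixed partial derivative ∂_t ∂_x u exists and is continuous. Let x̄ : [0,T) → ℝ be differentiable with ∂_x² u(x̄(t), t) = 0 for all t, and suppose the slope s(t) = ∂_x u(x̄(t), t) is differentiable with s'(t) = (∂_t ∂_x u)(x̄(t), t) + x̄'(t) (∂_x² u)(x̄(t), t). Then for all t ∈ [0,T): s'(t) = -(1/2) s(t)² + (1/α₁²) [ u(x̄(t),t)² + (g/2) ρ̄(x̄(t),t)² - (g α₂²/2) (∂_x ρ̄(x̄(t),t))² ] - (1/α₁²) (1/(2α₁)) ∫_ℝ e^{-|x̄(t)-y|/α₁}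 p(y,t) dy. -/

import Mathlib

open Set MeasureTheory

private lemma my_integral_Ioi_sub_Ioi {f : ℝ → ℝ} {a b : ℝ}
    (ha : IntegrableOn f (Ioi a)) (hb : IntegrableOn f (Ioi b)) :
    (∫ x in Ioi a, f x) - ∫ x in Ioi b, f x = ∫ x in a..b, f x := by
  rcases le_total a b with hab | hab
  · rw [intervalIntegral.integral_of_le hab, ← Ioc_union_Ioi_eq_Ioi hab,
      setIntegral_union (Ioc_disjoint_Ioi le_rfl) measurableSet_Ioi
        (ha.mono_set (by rw [← Ioc_union_Ioi_eq_Ioi hab]; exact subset_union_left)) hb]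
    ring
  · rw [intervalIntegral.integral_symm, intervalIntegral.integral_of_le hab,
      ← Ioc_union_Ioi_eq_Ioi hab,
      setIntegral_union (Ioc_disjoint_Ioi le_rfl) measurableSet_Ioi
        (hb.mono_set (by rw [← Ioc_union_Ioi_eq_Ioi hab]; exact subset_union_left)) ha]
    ring

/-- Derivative structure of the convolution with the kernel `(1/(2a)) e^{-|x|/a}`. -/
private lemma conv_deriv {a : ℝ} (ha : 0 < a) {q : ℝ → ℝ}
    (hqc : Continuous q) (hqi : Integrable q) :
    ∃ G : ℝ → ℝ,
      (∀ z : ℝ, HasDerivAt (fun x' => (1/(2*a)) * ∫ y : ℝ, Real.exp (-|x' - y|/a) * q y)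
        (G z) z)
      ∧ ∀ x : ℝ, HasDerivAt G
          ((1/a^2) * ((1/(2*a)) * ∫ y : ℝ, Real.exp (-|x - y|/a) * q y) - (1/a^2) * q x) x := by
  have ha0 : a ≠ 0 := ha.ne'
  set fA : ℝ → ℝ := fun y => Real.exp (y/a) * q y with hfA
  set fB : ℝ → ℝ := fun y => Real.exp (-y/a) * q y with hfB
  have hfAc : Continuous fA := (Real.continuous_exp.comp (continuous_id.div_const a)).mul hqc
  have hfBc : Continuous fB :=
    (Real.continuous_exp.comp (continuous_id.neg.div_const a)).mul hqc
  have hAint : ∀ x : ℝ, IntegrableOn fA (Iic x) := by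
    intro x
    refine Integrable.mono ((hqi.restrict (s := Iic x)).const_mul (Real.exp (x/a)))
      hfAc.aestronglyMeasurable.restrict ?_
    filter_upwards [ae_restrict_mem measurableSet_Iic] with y hy
    simp only [hfA, norm_mul, Real.norm_eq_abs, Real.abs_exp]
    have h1 : Real.exp (y/a) ≤ Real.exp (x/a) := Real.exp_le_exp.2 (by
      have : y ≤ x := hy
      gcongr)
    exact mul_le_mul_of_nonneg_right h1 (abs_nonneg _)
  have hBint : ∀ x : ℝ, IntegrableOn fB (Ioi x) := by
    intro x
    refine Integrable.mono ((hqi.restrict (s := Ioi x)).const_mul (Real.exp (-x/a)))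
      hfBc.aestronglyMeasurable.restrict ?_
    filter_upwards [ae_restrict_mem measurableSet_Ioi] with y hy
    simp only [hfB, norm_mul, Real.norm_eq_abs, Real.abs_exp]
    have h1 : Real.exp (-y/a) ≤ Real.exp (-x/a) := Real.exp_le_exp.2 (by
      have : x ≤ y := le_of_lt hy
      gcongr)
    exact mul_le_mul_of_nonneg_right h1 (abs_nonneg _)
  set AA : ℝ → ℝ := fun x => ∫ y in Iic x, fA y with hAA
  set BB : ℝ → ℝ := fun x => ∫ y in Ioi x, fB y with hBB
  have hA : ∀ x : ℝ, HasDerivAt AA (fA x) x := by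
    intro x
    have h0 : AA = fun x' => (∫ y in Iic (0:ℝ), fA y) + ∫ y in (0:ℝ)..x', fA y := by
      funext x'
      have := intervalIntegral.integral_Iic_sub_Iic (hAint 0) (hAint x')
      simp only [hAA]
      linarith
    rw [h0]
    exact ((hfAc.integral_hasStrictDerivAt 0 x).hasDerivAt).const_add _
  have hB : ∀ x : ℝ, HasDerivAt BB (-(fB x)) x := by
    intro x
    have h0 : BB = fun x' => (∫ y in Ioi (0:ℝ), fB y) - ∫ y in (0:ℝ)..x', fB y := by
      funext x'
      have := my_integral_Ioi_sub_Ioi (hBint 0) (hBint x')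
      simp only [hBB]
      linarith
    rw [h0]
    exact HasDerivAt.const_sub _ ((hfBc.integral_hasStrictDerivAt 0 x).hasDerivAt)
  have hKint : ∀ x : ℝ, Integrable (fun y => Real.exp (-|x - y|/a) * q y) := by
    intro x
    refine hqi.norm.mono'
      ((Real.continuous_exp.comp
        (((continuous_const.sub continuous_id).abs.neg).div_const a)).mul
        hqc).aestronglyMeasurable ?_
    filter_upwards with y
    rw [norm_mul, Real.norm_eq_abs, Real.abs_exp, Real.norm_eq_abs]
    have h1 : Real.exp (-|x - y|/a) ≤ 1 := by
      rw [show (1:ℝ) = Real.exp 0 by simp]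
      refine Real.exp_le_exp.2 ?_
      apply div_nonpos_of_nonpos_of_nonneg (neg_nonpos.2 (abs_nonneg _)) ha.le
    calc Real.exp (-|x - y|/a) * |q y| ≤ 1 * |q y| :=
          mul_le_mul_of_nonneg_right h1 (abs_nonneg _)
      _ = |q y| := one_mul _
  have hKsplit : ∀ x : ℝ, (∫ y : ℝ, Real.exp (-|x - y|/a) * q y)
      = Real.exp (-x/a) * AA x + Real.exp (x/a) * BB x := by
    intro x
    rw [← intervalIntegral.integral_Iic_add_Ioi (b := x) (hKint x).integrableOn (hKint x).integrableOn]
    congr 1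
    · rw [hAA]
      simp only
      rw [← integral_const_mul]
      refine setIntegral_congr_fun measurableSet_Iic fun y hy => ?_
      have hxy : |x - y| = x - y := abs_of_nonneg (sub_nonneg.2 (mem_Iic.mp hy))
      simp only [hfA]
      rw [hxy, ← mul_assoc, ← Real.exp_add]
      congr 2
      ring
    · rw [hBB]
      simp only
      rw [← integral_const_mul]
      refine setIntegral_congr_fun measurableSet_Ioi fun y hy => ?_
      have hxy : |x - y| = -(x - y) := abs_of_nonpos (sub_nonpos.2 (le_of_lt (mem_Ioi.mp hy)))
      simp only [hfB]
      rw [hxy, ← mul_assoc, ← Real.exp_add]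
      congr 2
      ring
  have hexp_neg : ∀ x : ℝ, HasDerivAt (fun x : ℝ => Real.exp (-x/a))
      (Real.exp (-x/a) * (-1/a)) x := by
    intro x
    exact ((hasDerivAt_id' (x := x)).neg.div_const a).exp
  have hexp_pos : ∀ x : ℝ, HasDerivAt (fun x : ℝ => Real.exp (x/a))
      (Real.exp (x/a) * (1/a)) x := by
    intro x
    exact ((hasDerivAt_id' (x := x)).div_const a).exp
  set K' : ℝ → ℝ := fun z => (1/a) * (Real.exp (z/a) * BB z - Real.exp (-z/a) * AA z)
    with hK'
  have hKd : ∀ x : ℝ, HasDerivAt (fun x' => ∫ y : ℝ, Real.exp (-|x' - y|/a) * q y) (K' x) x := by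
    intro x
    have h1 : HasDerivAt (fun z => Real.exp (-z/a) * AA z + Real.exp (z/a) * BB z)
        ((Real.exp (-x/a) * (-1/a)) * AA x + Real.exp (-x/a) * fA x
          + ((Real.exp (x/a) * (1/a)) * BB x + Real.exp (x/a) * (-(fB x)))) x :=
      ((hexp_neg x).mul (hA x)).add ((hexp_pos x).mul (hB x))
    have h2 : (fun x' => ∫ y : ℝ, Real.exp (-|x' - y|/a) * q y)
        = fun z => Real.exp (-z/a) * AA z + Real.exp (z/a) * BB z := funext hKsplit
    rw [h2, hK']
    convert h1 using 1
    simp only [hfA, hfB]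
    ring
  have hKd2 : ∀ x : ℝ, HasDerivAt K'
      ((1/a^2) * (∫ y : ℝ, Real.exp (-|x - y|/a) * q y) - (2/a) * q x) x := by
    intro x
    have h1 : HasDerivAt (fun z => Real.exp (z/a) * BB z - Real.exp (-z/a) * AA z)
        (((Real.exp (x/a) * (1/a)) * BB x + Real.exp (x/a) * (-(fB x)))
          - ((Real.exp (-x/a) * (-1/a)) * AA x + Real.exp (-x/a) * fA x)) x :=
      ((hexp_pos x).mul (hB x)).sub ((hexp_neg x).mul (hA x))
    have h2 := h1.const_mul (1/a)
    have h3 : K' = fun z => (1/a) * (Real.exp (z/a) * BB z - Real.exp (-z/a) * AA z) := hK'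
    rw [h3]
    refine h2.congr_deriv ?_
    symm
    rw [hKsplit x]
    simp only [hfA, hfB]
    have hee : Real.exp (-x/a) * Real.exp (x/a) = 1 := by
      rw [← Real.exp_add, neg_div, neg_add_cancel, Real.exp_zero]
    linear_combination ((2/a) * q x) * hee
  refine ⟨fun z => (1/(2*a)) * K' z, fun z => (hKd z).const_mul _, fun x => ?_⟩
  have h := (hKd2 x).const_mul (1/(2*a))
  refine h.congr_deriv ?_
  field_simp

/-- Slope evolution at a moving inflection point for the MCH2 system in nonlocal form
`u_t + u u_x = -∂_x K₁ * p`, `K₁(x) = (1/(2α₁)) e^{-|x|/α₁}`,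
`p = u² + (α₁²/2)u_x² + (g/2)ρ̄² - (gα₂²/2)ρ̄_x²`:
the slope `s(t) = u_x(x̄(t), t)` satisfies
`s' = -s²/2 + (1/α₁²)[u² + (g/2)ρ̄² - (gα₂²/2)ρ̄_x²]|_{x̄} - (1/α₁²)(K₁ * p)(x̄)`. -/
theorem mch2_slope_evolution
    (α₁ α₂ g T : ℝ) (hα₁ : 0 < α₁) (hα₂ : 0 < α₂) (hg : 0 < g) (hT : 0 < T)
    (u ρb p : ℝ → ℝ → ℝ)
    (hp_def : ∀ x t : ℝ, p x t
      = (u x t)^2 + (α₁^2/2) * (deriv (fun y => u y t) x)^2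
        + (g/2) * (ρb x t)^2 - (g*α₂^2/2) * (deriv (fun y => ρb y t) x)^2)
    (hu : ContDiff ℝ 2 (Function.uncurry u))
    (hρb : ∀ t : ℝ, ContDiff ℝ 1 (fun x => ρb x t))
    (hp_cont : ∀ t : ℝ, Continuous (fun x => p x t))
    (hp_bdd : ∀ t : ℝ, ∃ C, ∀ x, |p x t| ≤ C)
    (hp_int : ∀ t : ℝ, Integrable (fun x => p x t))
    (heq : ∀ x : ℝ, ∀ t ∈ Set.Ico (0 : ℝ) T,
      deriv (fun τ => u x τ) t + u x t * deriv (fun y => u y t) x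
        = - deriv (fun x' => (1/(2*α₁)) * ∫ y : ℝ, Real.exp (-|x' - y|/α₁) * p y t) x)
    (xb xb' : ℝ → ℝ)
    (hxb : ∀ t ∈ Set.Ico (0 : ℝ) T, HasDerivWithinAt xb (xb' t) (Set.Ico 0 T) t)
    (hinfl : ∀ t ∈ Set.Ico (0 : ℝ) T,
      deriv (fun y => deriv (fun z => u z t) y) (xb t) = 0)
    (s s' : ℝ → ℝ)
    (hs : ∀ t : ℝ, s t = deriv (fun y => u y t) (xb t))
    (hs' : ∀ t ∈ Set.Ico (0 : ℝ) T, HasDerivWithinAt s (s' t) (Set.Ico 0 T) t)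
    (hchain : ∀ t ∈ Set.Ico (0 : ℝ) T,
      s' t = deriv (fun τ => deriv (fun y => u y τ) (xb t)) t
        + xb' t * deriv (fun y => deriv (fun z => u z t) y) (xb t)) :
    ∀ t ∈ Set.Ico (0 : ℝ) T,
      s' t = -(1/2) * (s t)^2
        + (1/α₁^2) * ((u (xb t) t)^2 + (g/2) * (ρb (xb t) t)^2
            - (g*α₂^2/2) * (deriv (fun y => ρb y t) (xb t))^2)
        - (1/α₁^2) * ((1/(2*α₁)) * ∫ y : ℝ, Real.exp (-|xb t - y|/α₁) * p y t) := by
  intro t ht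
  obtain ⟨G, hG1, hG2⟩ := conv_deriv hα₁ (hp_cont t) (hp_int t)
  have hG1' : ∀ z : ℝ, HasDerivAt
      (fun x' => (1/(2*α₁)) * ∫ y : ℝ, Real.exp (-|x' - y|/α₁) * p y t) (G z) z := hG1
  have hG2' : ∀ x : ℝ, HasDerivAt G
      ((1/α₁^2) * ((1/(2*α₁)) * ∫ y : ℝ, Real.exp (-|x - y|/α₁) * p y t)
        - (1/α₁^2) * p x t) x := hG2
  -- partial derivative machinery for u
  have hud : Differentiable ℝ (Function.uncurry u) := hu.differentiable two_ne_zero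
  set F' : ℝ × ℝ → ℝ × ℝ →L[ℝ] ℝ := fderiv ℝ (Function.uncurry u) with hF'def
  have hF'c : ContDiff ℝ 1 F' := hu.fderiv_right (by norm_num)
  have hF' : ∀ z, HasFDerivAt (Function.uncurry u) (F' z) z := fun z => (hud z).hasFDerivAt
  have hP1 : ∀ (x τ : ℝ), HasDerivAt (fun y => u y τ) (F' (x, τ) (1, 0)) x := fun x τ =>
    (hF' (x, τ)).comp_hasDerivAt (l := Function.uncurry u) x ((hasDerivAt_id x).prodMk (hasDerivAt_const x τ))
  have hP2 : ∀ (x τ : ℝ), HasDerivAt (fun τ' => u x τ') (F' (x, τ) (0, 1)) τ := fun x τ =>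
    (hF' (x, τ)).comp_hasDerivAt (l := Function.uncurry u) τ ((hasDerivAt_const τ x).prodMk (hasDerivAt_id τ))
  set z₀ : ℝ × ℝ := (xb t, t) with hz₀
  set F'' := fderiv ℝ F' z₀ with hF''def
  have hF''h : HasFDerivAt F' F'' z₀ := ((hF'c.differentiable one_ne_zero) z₀).hasFDerivAt
  have hsymm : ∀ v w, F'' v w = F'' w v := second_derivative_symmetric hF' hF''h
  have happ : ∀ v : ℝ × ℝ, HasFDerivAt (fun z => F' z v)
      ((ContinuousLinearMap.apply ℝ ℝ v).comp F'') z₀ :=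
    fun v => (ContinuousLinearMap.apply ℝ ℝ v).hasFDerivAt.comp z₀ hF''h
  have hQ1 : ∀ v : ℝ × ℝ, HasDerivAt (fun y => F' (y, t) v) (F'' (1, 0) v) (xb t) := by
    intro v
    have h := (happ v).comp_hasDerivAt (xb t)
      ((hasDerivAt_id (xb t)).prodMk (hasDerivAt_const (xb t) t))
    simp at h; exact h
  have hQ2 : ∀ v : ℝ × ℝ, HasDerivAt (fun τ => F' (xb t, τ) v) (F'' (0, 1) v) t := by
    intro v
    have h := (happ v).comp_hasDerivAt t
      ((hasDerivAt_const t (xb t)).prodMk (hasDerivAt_id t))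
    simp at h; exact h
  have hs_eq : s t = F' (xb t, t) (1, 0) := by rw [hs t, (hP1 (xb t) t).deriv]
  -- inflection point : F'' (1,0) (1,0) = 0
  have hinfl' : F'' (1, 0) (1, 0) = 0 := by
    have h0 := hinfl t ht
    have he : (fun y => deriv (fun z => u z t) y) = fun y => F' (y, t) (1, 0) :=
      funext fun y => (hP1 y t).deriv
    rw [he] at h0
    rw [← (hQ1 (1, 0)).deriv]
    exact h0
  -- s' t = F'' (1,0) (0,1)
  have hs'_eq : s' t = F'' (1, 0) (0, 1) := by
    have hT1 : deriv (fun τ => deriv (fun y => u y τ) (xb t)) t = F'' (0, 1) (1, 0) := by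
      have he : (fun τ => deriv (fun y => u y τ) (xb t)) = fun τ => F' (xb t, τ) (1, 0) :=
        funext fun τ => (hP1 (xb t) τ).deriv
      rw [he, (hQ2 (1, 0)).deriv]
    rw [hchain t ht, hT1, hinfl t ht, mul_zero, add_zero]
    exact hsymm _ _
  -- the PDE rewritten with partial derivatives
  have hf_eq : (fun x => F' (x, t) (0, 1) + u x t * F' (x, t) (1, 0)) = fun x => -G x := by
    funext x
    have h0 := heq x t ht
    rw [(hG1' x).deriv] at h0
    rw [← (hP2 x t).deriv, ← (hP1 x t).deriv]
    exact h0
  have hDf : HasDerivAt (fun x => F' (x, t) (0, 1) + u x t * F' (x, t) (1, 0))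
      (F'' (1, 0) (0, 1) + (F' (xb t, t) (1, 0) * F' (xb t, t) (1, 0)
        + u (xb t) t * F'' (1, 0) (1, 0))) (xb t) :=
    (hQ1 (0, 1)).add ((hP1 (xb t) t).mul (hQ1 (1, 0)))
  have hDg : HasDerivAt (fun x => -G x)
      (-((1/α₁^2) * ((1/(2*α₁)) * ∫ y : ℝ, Real.exp (-|xb t - y|/α₁) * p y t)
        - (1/α₁^2) * p (xb t) t)) (xb t) := (hG2' (xb t)).neg
  have hkey : F'' (1, 0) (0, 1) + (F' (xb t, t) (1, 0) * F' (xb t, t) (1, 0)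
        + u (xb t) t * F'' (1, 0) (1, 0))
      = -((1/α₁^2) * ((1/(2*α₁)) * ∫ y : ℝ, Real.exp (-|xb t - y|/α₁) * p y t)
        - (1/α₁^2) * p (xb t) t) := by
    rw [← hDf.deriv, hf_eq, hDg.deriv]
  rw [hinfl', mul_zero, add_zero, ← hs_eq] at hkey
  have hp0 := hp_def (xb t) t
  rw [← hs t] at hp0
  have haux : α₁^2 * (α₁^2)⁻¹ = 1 := mul_inv_cancel₀ (pow_ne_zero 2 hα₁.ne')
  rw [hs'_eq]
  linear_combination hkey + (1/α₁^2) * hp0 + ((s t)^2/2) * haux
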